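/- arXiv:1404.0666 — 2 statements merged into one kernel-verified Lean document; each statement's English description precedes it below -/
import Mathlib

section
/- There exists a diagonal approximation Δ: P → P ⊗ P whose components satisfy: Δ_0(x) = x ⊗ x; Δ_1(y_i) = y_i ⊗ a_i x + x ⊗ y_i and Δ_1(z_i) = z_i ⊗ b_i x + x ⊗ z_i for all 1 ≤ i ≤ n; Δ_{02}(w) = x ⊗ w; and Δ_{11}(w) = Σ_{i=1}^n Σ_{j=1}^{i-1} (α_j y_j + β_j z_j) ⊗ q_{i-1}(y_i + a_i z_i) + Σ_{i=1}^n q_{i-1} y_i ⊗ q_{i-1} a_i z_i − Σ_{i=1}^{n-1} Σ_{j=1}^{i-1} (α_j y_j + β_j z_j) ⊗ q_{i-1} a_i b_i a_i^{-1} y_i − Σ_{i=1}^{n-1} (α_i y_i + q_{i-1} a_i z_i) ⊗ q_{i-1} a_i b_i a_i^{-1} y_i − Σ_{i=1}^{n-1} Σ_{j=1}^{i} (α_j y_j + β_j z_j) ⊗ q_i z_i − z_n ⊗ b_n y_n. -/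
open scoped TensorProduct
open scoped commutatorElement

namespace SurfaceOr

/-- Generators: `Sum.inl i` is `aᵢ`, `Sum.inr i` is `bᵢ`. -/
abbrev Gen (n : ℕ) := Fin n ⊕ Fin n

/-- The single relator `[a₁,b₁][a₂,b₂]⋯[aₙ,bₙ]` of the orientable surface group. -/
def rel (n : ℕ) : FreeGroup (Gen n) :=
  (List.ofFn fun i : Fin n =>
    ⁅(FreeGroup.of (Sum.inl i) : FreeGroup (Gen n)), FreeGroup.of (Sum.inr i)⁆).prod

/-- The orientable surface group of genus `n`. -/
abbrev SurfaceGroup (n : ℕ) := PresentedGroup ({rel n} : Set (FreeGroup (Gen n)))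

noncomputable def a {n : ℕ} (i : Fin n) : SurfaceGroup n := PresentedGroup.of (Sum.inl i)
noncomputable def b {n : ℕ} (i : Fin n) : SurfaceGroup n := PresentedGroup.of (Sum.inr i)

/-- `q k = p₁ p₂ ⋯ p_k` where `pᵢ = [aᵢ,bᵢ]`. -/
noncomputable def q {n : ℕ} (k : ℕ) : SurfaceGroup n :=
  ((List.ofFn fun i : Fin n => ⁅a i, b i⁆).take k).prod

/-- The integral group ring `ℤG`. -/
abbrev A (n : ℕ) := MonoidAlgebra ℤ (SurfaceGroup n)

/-- Inclusion of the group in its group ring. -/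
noncomputable def j {n : ℕ} : SurfaceGroup n →* A n := MonoidAlgebra.of ℤ (SurfaceGroup n)

/-- The Fox derivative `∂p/∂aᵢ = q_{i-1}(1 - aᵢbᵢaᵢ⁻¹)`. -/
noncomputable def Fa {n : ℕ} (i : Fin n) : A n :=
  j (q (n := n) i.val) * (1 - j (a i * b i * (a i)⁻¹))

/-- The Fox derivative `∂p/∂bᵢ = q_{i-1}aᵢ(1 - bᵢaᵢ⁻¹bᵢ⁻¹)`. -/
noncomputable def Fb {n : ℕ} (i : Fin n) : A n :=
  j (q (n := n) i.val * a i) * (1 - j (b i * (a i)⁻¹ * (b i)⁻¹))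

abbrev P0 (n : ℕ) := A n
abbrev P1 (n : ℕ) := Gen n → A n
abbrev P2 (n : ℕ) := A n

/-- Coefficients of `d₁`. -/
noncomputable def c {n : ℕ} : Gen n → A n
  | .inl i => j (a i) - 1
  | .inr i => j (b i) - 1

/-- Coefficients of `d₂` (the Fox derivatives of the relator). -/
noncomputable def fox {n : ℕ} : Gen n → A n
  | .inl i => Fa i
  | .inr i => Fb i

/-- `d₁ : P₁ → P₀`, `yᵢ ↦ (aᵢ-1)x`, `zᵢ ↦ (bᵢ-1)x`. -/
noncomputable def d1 {n : ℕ} : P1 n →ₗ[A n] P0 n where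
  toFun f := ∑ s, f s * c s
  map_add' f g := by simp [add_mul, Finset.sum_add_distrib]
  map_smul' r f := by simp [Finset.mul_sum, mul_assoc, smul_eq_mul, mul_add]

/-- `d₂ : P₂ → P₁`, `w ↦ Σᵢ (∂p/∂aᵢ)yᵢ + (∂p/∂bᵢ)zᵢ`. -/
noncomputable def d2 {n : ℕ} : P2 n →ₗ[A n] P1 n where
  toFun r := fun s => r * fox s
  map_add' r r' := by funext s; simp [add_mul]
  map_smul' r r' := by funext s; simp [mul_assoc, smul_eq_mul]

/-- The augmentation `ε : ℤG → ℤ`. -/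
noncomputable def aug {n : ℕ} : A n →ₐ[ℤ] ℤ := MonoidAlgebra.lift ℤ ℤ (SurfaceGroup n) 1

/-- `ε` as a `ℤ`-linear map. -/
noncomputable def augz {n : ℕ} : P0 n →ₗ[ℤ] ℤ := (aug (n := n)).toLinearMap

/-- `d₁` as a `ℤ`-linear map. -/
noncomputable def d1z {n : ℕ} : P1 n →ₗ[ℤ] P0 n := (d1 (n := n)).toAddMonoidHom.toIntLinearMap

/-- `d₂` as a `ℤ`-linear map. -/
noncomputable def d2z {n : ℕ} : P2 n →ₗ[ℤ] P1 n := (d2 (n := n)).toAddMonoidHom.toIntLinearMap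

/-- The action of `g ∈ G` on `P₀ = ℤG` (left multiplication), as a `ℤ`-linear map. -/
noncomputable def L0 {n : ℕ} (g : SurfaceGroup n) : P0 n →ₗ[ℤ] P0 n :=
  LinearMap.mulLeft ℤ (j g)

/-- The action of `g ∈ G` on `P₁ = (ℤG)²ⁿ`, as a `ℤ`-linear map. -/
noncomputable def L1 {n : ℕ} (g : SurfaceGroup n) : P1 n →ₗ[ℤ] P1 n :=
  LinearMap.pi fun s => (L0 g).comp (LinearMap.proj s)

/-- `(ε ⊗ ε) : P₀ ⊗ P₀ → ℤ ⊗ ℤ ≅ ℤ`. -/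
noncomputable def augaug {n : ℕ} : P0 n ⊗[ℤ] P0 n →ₗ[ℤ] ℤ :=
  (TensorProduct.lid ℤ ℤ).toLinearMap ∘ₗ TensorProduct.map augz augz

/-- The generator `yᵢ` of `P₁`. -/
noncomputable def Y {n : ℕ} (i : Fin n) : P1 n := Pi.single (Sum.inl i) 1

/-- The generator `zᵢ` of `P₁`. -/
noncomputable def Z {n : ℕ} (i : Fin n) : P1 n := Pi.single (Sum.inr i) 1
/-- The column of Fox derivatives `(∂p/∂aⱼ)yⱼ + (∂p/∂bⱼ)zⱼ`. -/
noncomputable def FoxCol {n : ℕ} (i : Fin n) : P1 n := Fa i • Y i + Fb i • Z i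

/-- The element `Δ₁₁(w) ∈ P₁ ⊗ P₁` of Theorem 2.2. -/
noncomputable def Delta11 (n : ℕ) (hn : 1 ≤ n) : P1 n ⊗[ℤ] P1 n :=
  (∑ i : Fin n, ∑ k ∈ Finset.Iio i,
      FoxCol k ⊗ₜ[ℤ] (j (q (n := n) i.val) • Y i + j (q (n := n) i.val * a i) • Z i))
  + (∑ i : Fin n, (j (q (n := n) i.val) • Y i) ⊗ₜ[ℤ] (j (q (n := n) i.val * a i) • Z i))
  - (∑ i ∈ Finset.univ.filter (fun i : Fin n => (i : ℕ) + 1 < n), ∑ k ∈ Finset.Iio i,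
      FoxCol k ⊗ₜ[ℤ] (j (q (n := n) i.val * (a i * b i * (a i)⁻¹)) • Y i))
  - (∑ i ∈ Finset.univ.filter (fun i : Fin n => (i : ℕ) + 1 < n),
      (Fa i • Y i + j (q (n := n) i.val * a i) • Z i) ⊗ₜ[ℤ] (j (q (n := n) i.val * (a i * b i * (a i)⁻¹)) • Y i))
  - (∑ i ∈ Finset.univ.filter (fun i : Fin n => (i : ℕ) + 1 < n), ∑ k ∈ Finset.Iic i,
      FoxCol k ⊗ₜ[ℤ] (j (q (n := n) (i.val + 1)) • Z i))
  - Z (⟨n - 1, by omega⟩ : Fin n) ⊗ₜ[ℤ]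
      (j (b (⟨n - 1, by omega⟩ : Fin n)) • Y (⟨n - 1, by omega⟩ : Fin n))

/-! ### Auxiliary development -/

section Aux
variable {n : ℕ}

lemma q_zero : q (n := n) 0 = 1 := by simp [q]

lemma q_succ (i : Fin n) : q (n := n) (i.val + 1) = q (n := n) i.val * ⁅a i, b i⁆ := by
  rw [q, q, List.prod_take_succ _ _ (by simp)]
  simp

lemma q_rel : q (n := n) n = 1 := by
  have hq : q (n := n) n = (List.ofFn fun i : Fin n => ⁅a i, b i⁆).prod := by
    rw [q, List.take_of_length_le (by simp)]
  rw [hq]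
  have : ((List.ofFn fun i : Fin n => ⁅a i, b i⁆)).prod
      = PresentedGroup.mk ({rel n} : Set (FreeGroup (Gen n))) (rel n) := by
    have hr := map_list_prod (PresentedGroup.mk ({rel n} : Set (FreeGroup (Gen n))))
      (List.ofFn fun i : Fin n =>
        ⁅(FreeGroup.of (Sum.inl i) : FreeGroup (Gen n)), FreeGroup.of (Sum.inr i)⁆)
    rw [List.map_ofFn] at hr
    exact hr.symm
  rw [this]
  exact PresentedGroup.one_of_mem rfl

end Aux
section Words
variable {n : ℕ}

noncomputable def gu (i : Fin n) : SurfaceGroup n := q i.val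
noncomputable def gs (i : Fin n) : SurfaceGroup n := q i.val * a i
noncomputable def gm (i : Fin n) : SurfaceGroup n := q i.val * a i * b i
noncomputable def gv (i : Fin n) : SurfaceGroup n := q i.val * a i * b i * (a i)⁻¹
noncomputable def gt (i : Fin n) : SurfaceGroup n := q (n := n) (i.val + 1)

lemma gu_mul_a (i : Fin n) : gu i * a i = gs i := rfl
lemma gs_mul_b (i : Fin n) : gs i * b i = gm i := rfl
lemma gv_mul_a (i : Fin n) : gv i * a i = gm i := by rw [gv, gm]; group
lemma gt_mul_b (i : Fin n) : gt i * b i = gv i := by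
  rw [gt, q_succ, gv, commutatorElement_def]; group

/-- The last index. -/
noncomputable def lastF (n : ℕ) (hn : 1 ≤ n) : Fin n := ⟨n - 1, by omega⟩

lemma gt_last (hn : 1 ≤ n) : gt (lastF n hn) = 1 := by
  have : (lastF n hn).val + 1 = n := by simp [lastF]; omega
  rw [gt, this, q_rel]

lemma gv_last (hn : 1 ≤ n) : gv (lastF n hn) = b (lastF n hn) := by
  rw [← gt_mul_b, gt_last hn, one_mul]

lemma gm_last (hn : 1 ≤ n) : gm (lastF n hn) = b (lastF n hn) * a (lastF n hn) := by
  rw [← gv_mul_a, gv_last hn]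

lemma Fa_eq (i : Fin n) : Fa i = j (gu i) - j (gv i) := by
  rw [Fa, mul_sub, mul_one, ← map_mul]
  have : q (n := n) i.val * (a i * b i * (a i)⁻¹) = gv i := by rw [gv]; group
  rw [this, gu]

lemma Fb_eq (i : Fin n) : Fb i = j (gs i) - j (gt i) := by
  rw [Fb, mul_sub, mul_one, ← map_mul]
  have : q (n := n) i.val * a i * (b i * (a i)⁻¹ * (b i)⁻¹) = gt i := by
    rw [gt, q_succ, commutatorElement_def]; group
  rw [this, gs]

end Words

section DOne
variable {n : ℕ}

lemma d1_apply (f : P1 n) : d1 f = ∑ s, f s * c s := rfl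
lemma d2_apply (r : A n) (s : Gen n) : d2 r s = r * fox s := rfl
lemma d1z_apply (f : P1 n) : d1z f = d1 f := rfl
lemma d2z_apply (r : A n) : d2z r = d2 r := rfl

lemma single_eq_smul (s : Gen n) (r : A n) :
    (Pi.single s r : P1 n) = r • (Pi.single s 1 : P1 n) := by
  rw [← Pi.single_smul, smul_eq_mul, mul_one]

lemma d1_single (s : Gen n) (r : A n) : d1 (Pi.single s r : P1 n) = r * c s := by
  rw [d1_apply]
  rw [Finset.sum_eq_single s (fun s' _ hne => by rw [Pi.single_eq_of_ne hne, zero_mul])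
    (fun h => absurd (Finset.mem_univ s) h)]
  rw [Pi.single_eq_same]

lemma d1_smul_Y (i : Fin n) (r : A n) : d1 (r • Y i) = r * j (a i) - r := by
  rw [Y, ← single_eq_smul, d1_single]
  show r * (j (a i) - 1) = _
  rw [mul_sub, mul_one]

lemma d1_smul_Z (i : Fin n) (r : A n) : d1 (r • Z i) = r * j (b i) - r := by
  rw [Z, ← single_eq_smul, d1_single]
  show r * (j (b i) - 1) = _
  rw [mul_sub, mul_one]

lemma d1_jsmul_Y (i : Fin n) (g : SurfaceGroup n) :
    d1 (j g • Y i) = j (g * a i) - j g := by rw [d1_smul_Y, ← map_mul]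

lemma d1_jsmul_Z (i : Fin n) (g : SurfaceGroup n) :
    d1 (j g • Z i) = j (g * b i) - j g := by rw [d1_smul_Z, ← map_mul]

lemma d1_FoxCol (i : Fin n) : d1 (FoxCol i) = j (gt i) - j (gu i) := by
  rw [FoxCol, map_add, d1_smul_Y, d1_smul_Z, Fa_eq, Fb_eq]
  simp only [sub_mul, ← map_mul, gu_mul_a, gv_mul_a, gs_mul_b, gt_mul_b]
  abel

lemma d1_row1 (i : Fin n) :
    d1 (j (gu i) • Y i + j (gs i) • Z i) = j (gm i) - j (gu i) := by
  rw [map_add, d1_jsmul_Y, d1_jsmul_Z, gu_mul_a, gs_mul_b]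
  abel

lemma d1_row4 (i : Fin n) :
    d1 (Fa i • Y i + j (gs i) • Z i) = j (gv i) - j (gu i) := by
  rw [map_add, d1_smul_Y, d1_jsmul_Z, Fa_eq, sub_mul, ← map_mul, ← map_mul,
    gu_mul_a, gv_mul_a, gs_mul_b]
  abel

end DOne
section Maps
variable {n : ℕ}

open TensorProduct

/-- The diagonal monoid hom `g ↦ g ⊗ g`. -/
noncomputable def diagHom : SurfaceGroup n →* (A n ⊗[ℤ] A n) where
  toFun g := j g ⊗ₜ[ℤ] j g
  map_one' := by
    show j (1 : SurfaceGroup n) ⊗ₜ[ℤ] j (1 : SurfaceGroup n) = (1 : A n ⊗[ℤ] A n)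
    rw [map_one]; rfl
  map_mul' g h := by
    show j (g * h) ⊗ₜ[ℤ] j (g * h) = j g ⊗ₜ[ℤ] j g * j h ⊗ₜ[ℤ] j h
    rw [Algebra.TensorProduct.tmul_mul_tmul, ← map_mul]

/-- `Δ₀` as an algebra hom. -/
noncomputable def Delta0a : A n →ₐ[ℤ] A n ⊗[ℤ] A n :=
  MonoidAlgebra.lift ℤ _ (SurfaceGroup n) diagHom

noncomputable def Delta0 :
    @LinearMap ℤ ℤ _ _ (RingHom.id ℤ) (P0 n) (P0 n ⊗[ℤ] P0 n) _ _ _ TensorProduct.instModule := (Delta0a (n := n)).toLinearMap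

lemma Delta0_of (g : SurfaceGroup n) : Delta0 (j g) = j g ⊗ₜ[ℤ] j g := by
  show Delta0a (MonoidAlgebra.of ℤ (SurfaceGroup n) g) = _
  rw [Delta0a, MonoidAlgebra.lift_of]
  rfl

lemma Delta0_one : Delta0 (1 : P0 n) = (1 : P0 n) ⊗ₜ[ℤ] (1 : P0 n) := by
  have := Delta0_of (n := n) 1
  rwa [map_one] at this

/-- Right multiplication `r ↦ r • m` on a module, as a `ℤ`-linear map. -/
noncomputable def rmul1 (m : P1 n) : A n →ₗ[ℤ] P1 n where
  toFun r := r • m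
  map_add' r r' := add_smul r r' m
  map_smul' z r := smul_assoc z r m

lemma rmul1_apply (m : P1 n) (r : A n) : rmul1 m r = r • m := rfl

noncomputable def rmul0 (m : A n) : A n →ₗ[ℤ] A n := LinearMap.mulRight ℤ m

lemma rmul0_apply (m r : A n) : rmul0 m r = r * m := rfl

/-- The basis element of `P1` at coordinate `s`. -/
noncomputable def e (s : Gen n) : P1 n := Pi.single s 1

/-- The generator letter at coordinate `s`. -/
noncomputable def gel : Gen n → SurfaceGroup n
  | .inl i => a i
  | .inr i => b i

/-- `Δ₁`. -/
noncomputable def Delta1 : P1 n →ₗ[ℤ] (P0 n ⊗[ℤ] P1 n) × (P1 n ⊗[ℤ] P0 n) :=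
  LinearMap.prod
    (∑ s : Gen n, (TensorProduct.map LinearMap.id (rmul1 (e s))) ∘ₗ Delta0 ∘ₗ LinearMap.proj s)
    (∑ s : Gen n, (TensorProduct.map (rmul1 (e s)) (rmul0 (j (gel s)))) ∘ₗ Delta0 ∘ₗ LinearMap.proj s)

lemma Delta1_apply (f : P1 n) :
    Delta1 f = (∑ s : Gen n, TensorProduct.map LinearMap.id (rmul1 (e s)) (Delta0 (f s)),
      ∑ s : Gen n, TensorProduct.map (rmul1 (e s)) (rmul0 (j (gel s))) (Delta0 (f s))) := by
  rw [Delta1, LinearMap.prod_apply]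
  simp [LinearMap.sum_apply]
  exact ⟨rfl, rfl⟩

/-- middle component of `Δ₂`. -/
noncomputable def Mmid (n : ℕ) (hn : 1 ≤ n) :
    @LinearMap ℤ ℤ _ _ (RingHom.id ℤ) (A n) (P1 n ⊗[ℤ] P1 n) _ _ _ TensorProduct.instModule :=
  Finsupp.lsum ℤ (fun g => LinearMap.toSpanSingleton ℤ _
    (TensorProduct.map (L1 g) (L1 g) (Delta11 n hn))) ∘ₗ
    (MonoidAlgebra.coeffLinearEquiv ℤ).toLinearMap

lemma Mmid_of (hn : 1 ≤ n) (g : SurfaceGroup n) :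
    Mmid n hn (j g) = TensorProduct.map (L1 g) (L1 g) (Delta11 n hn) := by
  rw [Mmid, LinearMap.comp_apply]
  erw [show (MonoidAlgebra.coeffLinearEquiv ℤ (j g) : SurfaceGroup n →₀ ℤ) = Finsupp.single g 1 from rfl]
  erw [Finsupp.lsum_single]
  rw [LinearMap.toSpanSingleton_apply, one_smul]

lemma L0_one : L0 (1 : SurfaceGroup n) = LinearMap.id := by
  apply LinearMap.ext; intro x
  simp [L0, map_one]

lemma L1_one : L1 (1 : SurfaceGroup n) = LinearMap.id := by
  apply LinearMap.ext; intro f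
  funext s
  simp [L1, L0, map_one]

lemma Mmid_one (hn : 1 ≤ n) : Mmid n hn 1 = Delta11 n hn := by
  have := Mmid_of hn 1
  rwa [map_one, L1_one, TensorProduct.map_id, LinearMap.id_apply] at this

/-- `Δ₂`. -/
noncomputable def Delta2 (n : ℕ) (hn : 1 ≤ n) :
    P2 n →ₗ[ℤ] (P0 n ⊗[ℤ] P2 n) × (P1 n ⊗[ℤ] P1 n) × (P2 n ⊗[ℤ] P0 n) :=
  LinearMap.prod Delta0 (LinearMap.prod (Mmid n hn)
    ((TensorProduct.map LinearMap.id (rmul0 (j (gm (lastF n hn))))) ∘ₗ Delta0))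

lemma Delta2_apply (hn : 1 ≤ n) (r : P2 n) :
    Delta2 n hn r = (Delta0 r, Mmid n hn r,
      TensorProduct.map LinearMap.id (rmul0 (j (gm (lastF n hn)))) (Delta0 r)) := rfl

end Maps
section Equivariance
variable {n : ℕ}

open TensorProduct

lemma ext_of {M : Type*} [AddCommGroup M] [Module ℤ M] (φ ψ : A n →ₗ[ℤ] M)
    (h : ∀ g : SurfaceGroup n, φ (j g) = ψ (j g)) : φ = ψ := by
  apply MonoidAlgebra.lhom_ext'
  intro g
  apply LinearMap.ext
  intro z
  have hz : (MonoidAlgebra.single g z : A n) = z • (j g) := by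
    rw [show (j g : A n) = MonoidAlgebra.single g 1 from rfl]
    rw [MonoidAlgebra.smul_single', mul_one]
  show φ (MonoidAlgebra.single g z) = ψ (MonoidAlgebra.single g z)
  rw [hz, LinearMap.map_smul, LinearMap.map_smul, h g]

lemma L0_apply (g : SurfaceGroup n) (x : A n) : L0 g x = j g * x := rfl
lemma L1_apply (g : SurfaceGroup n) (f : P1 n) : L1 g f = j g • f := rfl

lemma L0_mul (g h : SurfaceGroup n) : L0 (n := n) (g * h) = L0 g ∘ₗ L0 h := by
  apply LinearMap.ext; intro x
  simp [L0_apply, map_mul, mul_assoc]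

lemma L1_mul (g h : SurfaceGroup n) : L1 (n := n) (g * h) = L1 g ∘ₗ L1 h := by
  apply LinearMap.ext; intro f
  funext s
  show L0 (g * h) (f s) = L0 g (L0 h (f s))
  rw [L0_mul]; rfl

lemma Delta0_equivariant (g : SurfaceGroup n) (r : P0 n) :
    Delta0 (j g * r) = TensorProduct.map (L0 g) (L0 g) (Delta0 r) := by
  have h1 : Delta0 (j g * r) = (j g ⊗ₜ[ℤ] j g) * Delta0 r := by
    show Delta0a (j g * r) = _
    rw [map_mul]
    congr 1
    exact Delta0_of g
  rw [h1]
  induction (Delta0 (n := n) r) using TensorProduct.induction_on with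
  | zero => simp
  | tmul x y => rw [Algebra.TensorProduct.tmul_mul_tmul, TensorProduct.map_tmul]; rfl
  | add u v hu hv => rw [mul_add, map_add, hu, hv]

lemma Delta1_equivariant (g : SurfaceGroup n) (f : P1 n) :
    Delta1 (j g • f) = (TensorProduct.map (L0 g) (L1 g) (Delta1 f).1,
      TensorProduct.map (L1 g) (L0 g) (Delta1 f).2) := by
  rw [Delta1_apply, Delta1_apply]
  simp only [map_sum]
  refine Prod.ext ?_ ?_ <;> simp only
  · apply Finset.sum_congr rfl
    intro s _
    have hfs : (j g • f) s = j g * f s := rfl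
    rw [hfs, Delta0_equivariant]
    induction (Delta0 (n := n) (f s)) using TensorProduct.induction_on with
    | zero => simp
    | tmul x y =>
        simp only [TensorProduct.map_tmul, LinearMap.id_apply, rmul1_apply, L0_apply, L1_apply]
        rw [mul_smul]
    | add u v hu hv => simp only [map_add, hu, hv]
  · apply Finset.sum_congr rfl
    intro s _
    have hfs : (j g • f) s = j g * f s := rfl
    rw [hfs, Delta0_equivariant]
    induction (Delta0 (n := n) (f s)) using TensorProduct.induction_on with
    | zero => simp
    | tmul x y =>
        simp only [TensorProduct.map_tmul, LinearMap.id_apply, rmul1_apply, rmul0_apply,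
          L0_apply, L1_apply]
        rw [mul_smul, mul_assoc]
    | add u v hu hv => simp only [map_add, hu, hv]

lemma Mmid_equivariant (hn : 1 ≤ n) (g : SurfaceGroup n) (r : A n) :
    Mmid n hn (j g * r) = TensorProduct.map (L1 g) (L1 g) (Mmid n hn r) := by
  have : (Mmid n hn) ∘ₗ (L0 g) = (TensorProduct.map (L1 g) (L1 g)) ∘ₗ (Mmid n hn) := by
    apply ext_of
    intro h
    simp only [LinearMap.comp_apply, L0_apply, ← map_mul, Mmid_of]
    rw [L1_mul g h, TensorProduct.map_comp, LinearMap.comp_apply]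
  exact LinearMap.congr_fun this r

lemma Delta2_equivariant (hn : 1 ≤ n) (g : SurfaceGroup n) (r : P2 n) :
    Delta2 n hn (j g * r) = (TensorProduct.map (L0 g) (L0 g) ((Delta2 n hn r).1),
      TensorProduct.map (L1 g) (L1 g) ((Delta2 n hn r).2.1),
      TensorProduct.map (L0 g) (L0 g) ((Delta2 n hn r).2.2)) := by
  rw [Delta2_apply, Delta2_apply]
  refine Prod.ext ?_ (Prod.ext ?_ ?_) <;> simp only
  · exact Delta0_equivariant g r
  · exact Mmid_equivariant hn g r
  · rw [Delta0_equivariant]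
    induction (Delta0 (n := n) r) using TensorProduct.induction_on with
    | zero => simp
    | tmul x y =>
        simp only [TensorProduct.map_tmul, LinearMap.id_apply, rmul0_apply, L0_apply]
        rw [mul_assoc]
    | add u v hu hv => simp only [map_add, hu, hv]

lemma aug_of (g : SurfaceGroup n) : aug (j g) = 1 := by
  show aug (MonoidAlgebra.of ℤ (SurfaceGroup n) g) = 1
  rw [aug, MonoidAlgebra.lift_of]
  rfl

lemma aug_compat (r : P0 n) : augaug (Delta0 r) = aug r := by
  have : (augaug ∘ₗ Delta0 : A n →ₗ[ℤ] ℤ) = augz := by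
    apply ext_of
    intro g
    simp only [LinearMap.comp_apply, Delta0_of, augaug, TensorProduct.map_tmul]
    change (TensorProduct.lid ℤ ℤ) (TensorProduct.map augz augz (Delta0 (j g))) = augz (j g)
    rw [Delta0_of, TensorProduct.map_tmul]
    show (TensorProduct.lid ℤ ℤ) (aug (j g) ⊗ₜ[ℤ] aug (j g)) = aug (j g)
    rw [aug_of, TensorProduct.lid_tmul, smul_eq_mul, mul_one]
  exact LinearMap.congr_fun this r

end Equivariance

section Chain1
variable {n : ℕ}
open TensorProduct

lemma c_eq (s : Gen n) : c s = j (gel s) - 1 := by cases s <;> rfl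

lemma d1_smul_e (s : Gen n) (r : A n) : d1 (r • e s) = r * c s := by
  rw [e, ← single_eq_smul, d1_single]

lemma chain1_aux (s : Gen n) (r : A n) :
    TensorProduct.map LinearMap.id d1z (TensorProduct.map LinearMap.id (rmul1 (e s)) (Delta0 r))
      + TensorProduct.map d1z LinearMap.id
          (TensorProduct.map (rmul1 (e s)) (rmul0 (j (gel s))) (Delta0 r))
      = Delta0 (r * c s) := by
  have key : (TensorProduct.map LinearMap.id d1z ∘ₗ
        TensorProduct.map LinearMap.id (rmul1 (e s)) ∘ₗ Delta0)
      + (TensorProduct.map d1z LinearMap.id ∘ₗ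
        TensorProduct.map (rmul1 (e s)) (rmul0 (j (gel s))) ∘ₗ Delta0)
      = Delta0 ∘ₗ rmul0 (c s) := by
    apply ext_of
    intro g
    simp only [LinearMap.add_apply, LinearMap.comp_apply, rmul0_apply, Delta0_of,
      TensorProduct.map_tmul, LinearMap.id_apply, rmul1_apply, d1z_apply, d1_smul_e]
    rw [c_eq, mul_sub, mul_one, ← map_mul, map_sub, Delta0_of, Delta0_of]
    rw [TensorProduct.tmul_sub, TensorProduct.sub_tmul]
    abel
  exact LinearMap.congr_fun key r

lemma chain1 (f : P1 n) :
    TensorProduct.map LinearMap.id d1z ((Delta1 f).1)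
      + TensorProduct.map d1z LinearMap.id ((Delta1 f).2) = Delta0 (d1 f) := by
  rw [Delta1_apply]
  simp only [map_sum]
  rw [← Finset.sum_add_distrib, d1_apply, map_sum]
  exact Finset.sum_congr rfl fun s _ => chain1_aux s (f s)

end Chain1
section Gens
variable {n : ℕ}
open TensorProduct

lemma e_inl (i : Fin n) : e (Sum.inl i) = Y i := rfl
lemma e_inr (i : Fin n) : e (Sum.inr i) = Z i := rfl
lemma gel_inl (i : Fin n) : gel (Sum.inl i) = a i := rfl
lemma gel_inr (i : Fin n) : gel (Sum.inr i) = b i := rfl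

lemma Delta1_Y (i : Fin n) :
    Delta1 (Y i) = ((1 : P0 n) ⊗ₜ[ℤ] Y i, Y i ⊗ₜ[ℤ] j (a i)) := by
  rw [Delta1_apply]
  refine Prod.ext ?_ ?_ <;> simp only
  · rw [Finset.sum_eq_single (Sum.inl i) (fun s _ hne => by
      rw [show (Y i : P1 n) s = 0 from Pi.single_eq_of_ne hne 1, map_zero, map_zero])
      (fun h => absurd (Finset.mem_univ _) h)]
    rw [show (Y i : P1 n) (Sum.inl i) = 1 from Pi.single_eq_same _ _, Delta0_one,
      TensorProduct.map_tmul]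
    rw [LinearMap.id_apply, rmul1_apply, one_smul, e_inl]
  · rw [Finset.sum_eq_single (Sum.inl i) (fun s _ hne => by
      rw [show (Y i : P1 n) s = 0 from Pi.single_eq_of_ne hne 1, map_zero, map_zero])
      (fun h => absurd (Finset.mem_univ _) h)]
    rw [show (Y i : P1 n) (Sum.inl i) = 1 from Pi.single_eq_same _ _, Delta0_one,
      TensorProduct.map_tmul]
    rw [rmul1_apply, one_smul, e_inl, rmul0_apply, one_mul, gel_inl]

lemma Delta1_Z (i : Fin n) :
    Delta1 (Z i) = ((1 : P0 n) ⊗ₜ[ℤ] Z i, Z i ⊗ₜ[ℤ] j (b i)) := by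
  rw [Delta1_apply]
  refine Prod.ext ?_ ?_ <;> simp only
  · rw [Finset.sum_eq_single (Sum.inr i) (fun s _ hne => by
      rw [show (Z i : P1 n) s = 0 from Pi.single_eq_of_ne hne 1, map_zero, map_zero])
      (fun h => absurd (Finset.mem_univ _) h)]
    rw [show (Z i : P1 n) (Sum.inr i) = 1 from Pi.single_eq_same _ _, Delta0_one,
      TensorProduct.map_tmul]
    rw [LinearMap.id_apply, rmul1_apply, one_smul, e_inr]
  · rw [Finset.sum_eq_single (Sum.inr i) (fun s _ hne => by
      rw [show (Z i : P1 n) s = 0 from Pi.single_eq_of_ne hne 1, map_zero, map_zero])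
      (fun h => absurd (Finset.mem_univ _) h)]
    rw [show (Z i : P1 n) (Sum.inr i) = 1 from Pi.single_eq_same _ _, Delta0_one,
      TensorProduct.map_tmul]
    rw [rmul1_apply, one_smul, e_inr, rmul0_apply, one_mul, gel_inr]

end Gens

section SumHelpers
variable {n : ℕ}

lemma sum_Iio_val {M : Type*} [AddCommMonoid M] (i : Fin n) (F : ℕ → M) :
    ∑ k ∈ Finset.Iio i, F k.val = ∑ k ∈ Finset.range i.val, F k := by
  have : Finset.range i.val = Finset.Iio i.val := by ext k; simp
  rw [this, ← Fin.map_valEmbedding_Iio, Finset.sum_map]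
  rfl

lemma sum_Iic_val {M : Type*} [AddCommMonoid M] (i : Fin n) (F : ℕ → M) :
    ∑ k ∈ Finset.Iic i, F k.val = ∑ k ∈ Finset.range (i.val + 1), F k := by
  have : Finset.range (i.val + 1) = Finset.Iic i.val := by ext k; simp
  rw [this, ← Fin.map_valEmbedding_Iic, Finset.sum_map]
  rfl

lemma FoxCol_eq (i : Fin n) :
    FoxCol i = (j (gu i) - j (gv i)) • Y i + (j (gs i) - j (gt i)) • Z i := by
  rw [FoxCol, Fa_eq, Fb_eq]

lemma sum_dFox (i : Fin n) :
    ∑ k ∈ Finset.Iio i, d1 (FoxCol k) = j (gu i) - 1 := by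
  have h1 : ∑ k ∈ Finset.Iio i, d1 (FoxCol k)
      = ∑ k ∈ Finset.Iio i, (j (q (n := n) (k.val + 1)) - j (q (n := n) k.val)) :=
    Finset.sum_congr rfl fun k _ => by rw [d1_FoxCol, gt, gu]
  have h2 : ∑ k ∈ Finset.Iio i, (j (q (n := n) (k.val + 1)) - j (q (n := n) k.val))
      = ∑ m ∈ Finset.range i.val, (j (q (n := n) (m + 1)) - j (q (n := n) m)) :=
    sum_Iio_val i (fun m => j (q (n := n) (m + 1)) - j (q (n := n) m))
  have h3 : ∑ m ∈ Finset.range i.val, (j (q (n := n) (m + 1)) - j (q (n := n) m))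
      = j (q (n := n) i.val) - j (q (n := n) 0) :=
    Finset.sum_range_sub (fun m => j (q (n := n) m)) i.val
  rw [h1, h2, h3, q_zero, map_one, gu]

lemma sum_dFox' (i : Fin n) :
    ∑ k ∈ Finset.Iic i, d1 (FoxCol k) = j (gt i) - 1 := by
  have h1 : ∑ k ∈ Finset.Iic i, d1 (FoxCol k)
      = ∑ k ∈ Finset.Iic i, (j (q (n := n) (k.val + 1)) - j (q (n := n) k.val)) :=
    Finset.sum_congr rfl fun k _ => by rw [d1_FoxCol, gt, gu]
  have h2 : ∑ k ∈ Finset.Iic i, (j (q (n := n) (k.val + 1)) - j (q (n := n) k.val))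
      = ∑ m ∈ Finset.range (i.val + 1), (j (q (n := n) (m + 1)) - j (q (n := n) m)) :=
    sum_Iic_val i (fun m => j (q (n := n) (m + 1)) - j (q (n := n) m))
  have h3 : ∑ m ∈ Finset.range (i.val + 1), (j (q (n := n) (m + 1)) - j (q (n := n) m))
      = j (q (n := n) (i.val + 1)) - j (q (n := n) 0) :=
    Finset.sum_range_sub (fun m => j (q (n := n) m)) (i.val + 1)
  rw [h1, h2, h3, q_zero, map_one, gt]

lemma d2_one : d2 (1 : A n) = ∑ i : Fin n, FoxCol i := by
  have h1 : d2 (1 : A n) = fox := funext fun s => one_mul _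
  have h2 : (fox : P1 n) = ∑ s : Gen n, Pi.single s (fox s) :=
    (Finset.univ_sum_single (fox (n := n))).symm
  rw [h1, h2, Fintype.sum_sum_type]
  have h3 : ∀ i : Fin n, (Pi.single (Sum.inl i) (fox (Sum.inl i)) : P1 n) = Fa i • Y i :=
    fun i => by rw [Y, single_eq_smul]; rfl
  have h4 : ∀ i : Fin n, (Pi.single (Sum.inr i) (fox (Sum.inr i)) : P1 n) = Fb i • Z i :=
    fun i => by rw [Z, single_eq_smul]; rfl
  simp only [h3, h4, FoxCol]
  rw [Finset.sum_add_distrib]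

end SumHelpers
section KeyA
variable {n : ℕ}
open TensorProduct

lemma d1_Yv (i : Fin n) : d1 (Y i) = j (a i) - 1 := by
  rw [Y, d1_single, one_mul]; rfl

lemma d1_Zv (i : Fin n) : d1 (Z i) = j (b i) - 1 := by
  rw [Z, d1_single, one_mul]; rfl

lemma Delta11_norm (hn : 1 ≤ n) :
    Delta11 n hn =
      (∑ i : Fin n, ∑ k ∈ Finset.Iio i,
        FoxCol k ⊗ₜ[ℤ] (j (gu i) • Y i + j (gs i) • Z i))
      + (∑ i : Fin n, (j (gu i) • Y i) ⊗ₜ[ℤ] (j (gs i) • Z i))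
      - (∑ i ∈ Finset.univ.filter (fun i : Fin n => (i : ℕ) + 1 < n), ∑ k ∈ Finset.Iio i,
          FoxCol k ⊗ₜ[ℤ] (j (gv i) • Y i))
      - (∑ i ∈ Finset.univ.filter (fun i : Fin n => (i : ℕ) + 1 < n),
          (Fa i • Y i + j (gs i) • Z i) ⊗ₜ[ℤ] (j (gv i) • Y i))
      - (∑ i ∈ Finset.univ.filter (fun i : Fin n => (i : ℕ) + 1 < n), ∑ k ∈ Finset.Iic i,
          FoxCol k ⊗ₜ[ℤ] (j (gt i) • Z i))
      - Z (lastF n hn) ⊗ₜ[ℤ] (j (b (lastF n hn)) • Y (lastF n hn)) := by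
  have hv : ∀ i : Fin n, q (n := n) i.val * (a i * b i * (a i)⁻¹) = gv i := fun i => by
    rw [gv]; group
  rw [Delta11]
  simp only [hv]
  rfl

lemma keyA (hn : 1 ≤ n) :
    (1 : P0 n) ⊗ₜ[ℤ] d2 (1 : A n) + TensorProduct.map d1z LinearMap.id (Delta11 n hn)
      = ∑ s : Gen n, TensorProduct.map LinearMap.id (rmul1 (e s)) (Delta0 (fox s)) := by
  classical
  -- right-hand side
  have hRY : ∀ i : Fin n,
      TensorProduct.map LinearMap.id (rmul1 (e (Sum.inl i))) (Delta0 (fox (Sum.inl i)))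
        = j (gu i) ⊗ₜ[ℤ] (j (gu i) • Y i) - j (gv i) ⊗ₜ[ℤ] (j (gv i) • Y i) := by
    intro i
    rw [show fox (Sum.inl i) = Fa i from rfl, Fa_eq, map_sub, Delta0_of, Delta0_of, map_sub,
      TensorProduct.map_tmul, TensorProduct.map_tmul]
    rfl
  have hRZ : ∀ i : Fin n,
      TensorProduct.map LinearMap.id (rmul1 (e (Sum.inr i))) (Delta0 (fox (Sum.inr i)))
        = j (gs i) ⊗ₜ[ℤ] (j (gs i) • Z i) - j (gt i) ⊗ₜ[ℤ] (j (gt i) • Z i) := by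
    intro i
    rw [show fox (Sum.inr i) = Fb i from rfl, Fb_eq, map_sub, Delta0_of, Delta0_of, map_sub,
      TensorProduct.map_tmul, TensorProduct.map_tmul]
    rfl
  rw [Fintype.sum_sum_type]
  simp only [hRY, hRZ]
  rw [← Finset.sum_add_distrib]
  -- left-hand side
  rw [d2_one, TensorProduct.tmul_sum, Delta11_norm hn]
  rw [map_sub, map_sub, map_sub, map_sub, map_add]
  simp only [map_sum, TensorProduct.map_tmul, LinearMap.id_apply, d1z_apply]
  simp only [← TensorProduct.sum_tmul]
  simp only [sum_dFox, sum_dFox', d1_jsmul_Y, gu_mul_a, d1_row4, d1_Zv]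
  rw [Finset.sum_filter, Finset.sum_filter, Finset.sum_filter]
  have hT6 : (j (b (lastF n hn)) - 1) ⊗ₜ[ℤ] (j (b (lastF n hn)) • Y (lastF n hn))
      = ∑ i : Fin n, if i = lastF n hn then (j (b i) - 1) ⊗ₜ[ℤ] (j (b i) • Y i) else 0 := by
    rw [Finset.sum_ite_eq']
    simp
  rw [hT6]
  simp only [← Finset.sum_sub_distrib, ← Finset.sum_add_distrib]
  apply Finset.sum_congr rfl
  intro i _
  by_cases hi : (i : ℕ) + 1 < n
  · have hne : ¬(i = lastF n hn) := by
      intro h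
      rw [h] at hi
      simp only [lastF] at hi
      omega
    rw [if_pos hi, if_pos hi, if_pos hi, if_neg hne]
    rw [FoxCol_eq]
    simp only [sub_smul, TensorProduct.tmul_add, TensorProduct.tmul_sub,
      TensorProduct.sub_tmul, TensorProduct.add_tmul]
    abel
  · have hlast : i = lastF n hn := by
      apply Fin.ext
      have := i.isLt
      simp only [lastF]
      omega
    rw [if_neg hi, if_neg hi, if_neg hi, if_pos hlast, hlast]
    rw [FoxCol_eq, gt_last hn, gv_last hn, map_one]
    simp only [one_smul, sub_smul, TensorProduct.tmul_add, TensorProduct.tmul_sub,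
      TensorProduct.sub_tmul, TensorProduct.add_tmul]
    abel

end KeyA
section KeyB
variable {n : ℕ}
open TensorProduct

lemma telescope_Ico {M : Type*} [AddCommGroup M] (f : ℕ → M) (x y : ℕ) (h : x ≤ y) :
    ∑ i ∈ Finset.Ico x y, (f (i + 1) - f i) = f y - f x := by
  induction y, h using Nat.le_induction with
  | base => rw [Finset.Ico_self, Finset.sum_empty, sub_self]
  | succ y hy ih => rw [Finset.sum_Ico_succ_top hy, ih]; abel

lemma filter_not_last (hn : 1 ≤ n) :
    Finset.univ.filter (fun i : Fin n => ¬((i : ℕ) + 1 < n)) = {lastF n hn} := by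
  ext i
  simp only [Finset.mem_filter, Finset.mem_univ, true_and, Finset.mem_singleton,
    Fin.ext_iff, lastF]
  have := i.isLt
  omega

lemma Iio_last (hn : 1 ≤ n) :
    Finset.Iio (lastF n hn) = Finset.univ.filter (fun k : Fin n => (k : ℕ) + 1 < n) := by
  ext k
  simp only [Finset.mem_Iio, Finset.mem_filter, Finset.mem_univ, true_and, Fin.lt_def, lastF]
  have := k.isLt
  omega

lemma hinner (hn : 1 ≤ n) (k : Fin n) :
    ∑ i ∈ Finset.univ.filter (fun i : Fin n => ((i : ℕ) + 1 < n) ∧ k < i),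
        (j (gt i) - j (gu i))
      = if (k : ℕ) + 1 < n then j (gu (lastF n hn)) - j (gt k) else (0 : A n) := by
  have hset : Finset.map Fin.valEmbedding
      (Finset.univ.filter (fun i : Fin n => ((i : ℕ) + 1 < n) ∧ k < i))
      = Finset.Ico (k.val + 1) (n - 1) := by
    ext m
    simp only [Finset.mem_map, Finset.mem_filter, Finset.mem_univ, true_and,
      Fin.valEmbedding_apply, Finset.mem_Ico]
    constructor
    · rintro ⟨i, ⟨h1, h2⟩, rfl⟩
      have := Fin.lt_def.mp h2
      omega
    · intro hm
      exact ⟨⟨m, by omega⟩, ⟨show m + 1 < n by omega, Fin.lt_def.mpr (show k.val < m by omega)⟩,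
        rfl⟩
  have h1 : ∑ i ∈ Finset.univ.filter (fun i : Fin n => ((i : ℕ) + 1 < n) ∧ k < i),
      (j (gt i) - j (gu i))
      = ∑ m ∈ Finset.Ico (k.val + 1) (n - 1), (j (q (n := n) (m + 1)) - j (q (n := n) m)) := by
    rw [← hset, Finset.sum_map]
    rfl
  rw [h1]
  by_cases hk : (k : ℕ) + 1 < n
  · rw [if_pos hk]
    have ht := telescope_Ico (fun m => j (q (n := n) m)) (k.val + 1) (n - 1) (by omega)
    exact ht
  · rw [if_neg hk, Finset.Ico_eq_empty (by omega), Finset.sum_empty]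

set_option maxHeartbeats 2000000 in
lemma keyB (hn : 1 ≤ n) :
    d2 (1 : A n) ⊗ₜ[ℤ] j (gm (lastF n hn))
      - TensorProduct.map LinearMap.id d1z (Delta11 n hn)
      = ∑ s : Gen n, TensorProduct.map (rmul1 (e s)) (rmul0 (j (gel s))) (Delta0 (fox s)) := by
  classical
  -- abbreviate pieces
  have hba : j (b (lastF n hn) * a (lastF n hn)) = (j (gm (lastF n hn)) : A n) := by
    rw [gm_last hn]
  have hbv : (j (b (lastF n hn)) : A n) = j (gv (lastF n hn)) := by rw [gv_last hn]
  -- step 1 : compute map id d1z of Delta11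
  have hM : TensorProduct.map LinearMap.id d1z (Delta11 n hn)
      = (∑ i : Fin n, ∑ k ∈ Finset.Iio i, FoxCol k ⊗ₜ[ℤ] (j (gm i) - j (gu i)))
        + (∑ i : Fin n, (j (gu i) • Y i) ⊗ₜ[ℤ] (j (gm i) - j (gs i)))
        - (∑ i ∈ Finset.univ.filter (fun i : Fin n => (i : ℕ) + 1 < n), ∑ k ∈ Finset.Iio i,
            FoxCol k ⊗ₜ[ℤ] (j (gm i) - j (gv i)))
        - (∑ i ∈ Finset.univ.filter (fun i : Fin n => (i : ℕ) + 1 < n),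
            (Fa i • Y i + j (gs i) • Z i) ⊗ₜ[ℤ] (j (gm i) - j (gv i)))
        - (∑ i ∈ Finset.univ.filter (fun i : Fin n => (i : ℕ) + 1 < n), ∑ k ∈ Finset.Iic i,
            FoxCol k ⊗ₜ[ℤ] (j (gv i) - j (gt i)))
        - Z (lastF n hn) ⊗ₜ[ℤ] (j (gm (lastF n hn)) - j (gv (lastF n hn))) := by
    rw [Delta11_norm hn]
    rw [map_sub, map_sub, map_sub, map_sub, map_add]
    simp only [map_sum, TensorProduct.map_tmul, LinearMap.id_apply, d1z_apply,
      d1_row1, d1_jsmul_Y, d1_jsmul_Z, gu_mul_a, gv_mul_a, gs_mul_b, gt_mul_b]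
    rw [hba, hbv]
  -- step 2 : split the `Iic` inner sums
  have hIic : ∀ i : Fin n, (∑ k ∈ Finset.Iic i, FoxCol k ⊗ₜ[ℤ] (j (gv i) - j (gt i)))
      = (∑ k ∈ Finset.Iio i, FoxCol k ⊗ₜ[ℤ] (j (gv i) - j (gt i)))
        + FoxCol i ⊗ₜ[ℤ] (j (gv i) - j (gt i)) := by
    intro i
    rw [← Finset.Iio_insert i, Finset.sum_insert (by simp)]
    abel
  -- step 3 : split the first double sum at the last index
  have hfun : ∀ G : Fin n → (P1 n ⊗[ℤ] P0 n), (∑ i : Fin n, G i)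
      = (∑ i ∈ Finset.univ.filter (fun i : Fin n => (i : ℕ) + 1 < n), G i)
        + G (lastF n hn) := by
    intro G
    rw [← Finset.sum_filter_add_sum_filter_not Finset.univ
      (fun i : Fin n => (i : ℕ) + 1 < n) G, filter_not_last hn, Finset.sum_singleton]
  -- step 4 : the per-i combination of the three `Iio` double sums
  have hcomb : (∑ i ∈ Finset.univ.filter (fun i : Fin n => (i : ℕ) + 1 < n),
        ∑ k ∈ Finset.Iio i, FoxCol k ⊗ₜ[ℤ] (j (gm i) - j (gu i)))
      - (∑ i ∈ Finset.univ.filter (fun i : Fin n => (i : ℕ) + 1 < n), ∑ k ∈ Finset.Iio i,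
          FoxCol k ⊗ₜ[ℤ] (j (gm i) - j (gv i)))
      - (∑ i ∈ Finset.univ.filter (fun i : Fin n => (i : ℕ) + 1 < n), ∑ k ∈ Finset.Iio i,
          FoxCol k ⊗ₜ[ℤ] (j (gv i) - j (gt i)))
      = ∑ i ∈ Finset.univ.filter (fun i : Fin n => (i : ℕ) + 1 < n), ∑ k ∈ Finset.Iio i,
          FoxCol k ⊗ₜ[ℤ] (j (gt i) - j (gu i)) := by
    rw [← Finset.sum_sub_distrib, ← Finset.sum_sub_distrib]
    refine Finset.sum_congr rfl fun i _ => ?_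
    rw [← Finset.sum_sub_distrib, ← Finset.sum_sub_distrib]
    refine Finset.sum_congr rfl fun k _ => ?_
    rw [← TensorProduct.tmul_sub, ← TensorProduct.tmul_sub]
    congr 1
    abel
  -- step 5 : swap the double sum and telescope
  have hswap : (∑ i ∈ Finset.univ.filter (fun i : Fin n => (i : ℕ) + 1 < n),
        ∑ k ∈ Finset.Iio i, FoxCol k ⊗ₜ[ℤ] (j (gt i) - j (gu i)))
      = ∑ k : Fin n, FoxCol k ⊗ₜ[ℤ]
          (if (k : ℕ) + 1 < n then j (gu (lastF n hn)) - j (gt k) else 0) := by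
    rw [Finset.sum_comm' (s' := fun k : Fin n =>
        Finset.univ.filter (fun i : Fin n => ((i : ℕ) + 1 < n) ∧ k < i))
      (t' := Finset.univ) (by
        intro i k
        simp [and_comm])]
    refine Finset.sum_congr rfl fun k _ => ?_
    rw [← TensorProduct.tmul_sum, hinner hn k]
  -- step 6 : split `Iic` sums, as a single equation
  have h3 : (∑ i ∈ Finset.univ.filter (fun i : Fin n => (i : ℕ) + 1 < n), ∑ k ∈ Finset.Iic i,
        FoxCol k ⊗ₜ[ℤ] (j (gv i) - j (gt i)))
      = (∑ i ∈ Finset.univ.filter (fun i : Fin n => (i : ℕ) + 1 < n), ∑ k ∈ Finset.Iio i,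
          FoxCol k ⊗ₜ[ℤ] (j (gv i) - j (gt i)))
        + (∑ i ∈ Finset.univ.filter (fun i : Fin n => (i : ℕ) + 1 < n),
            FoxCol i ⊗ₜ[ℤ] (j (gv i) - j (gt i))) := by
    simp only [hIic]
    rw [Finset.sum_add_distrib]
  have hD := hcomb.trans hswap
  -- step 7 : the cleaned-up form of `map id d1z (Delta11)`
  have hM2 : TensorProduct.map LinearMap.id d1z (Delta11 n hn)
      = (∑ k : Fin n, FoxCol k ⊗ₜ[ℤ]
            (if (k : ℕ) + 1 < n then j (gu (lastF n hn)) - j (gt k) else 0))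
        + (∑ k ∈ Finset.Iio (lastF n hn),
            FoxCol k ⊗ₜ[ℤ] (j (gm (lastF n hn)) - j (gu (lastF n hn))))
        + (∑ i : Fin n, (j (gu i) • Y i) ⊗ₜ[ℤ] (j (gm i) - j (gs i)))
        - (∑ i ∈ Finset.univ.filter (fun i : Fin n => (i : ℕ) + 1 < n),
            (Fa i • Y i + j (gs i) • Z i) ⊗ₜ[ℤ] (j (gm i) - j (gv i)))
        - (∑ i ∈ Finset.univ.filter (fun i : Fin n => (i : ℕ) + 1 < n),
            FoxCol i ⊗ₜ[ℤ] (j (gv i) - j (gt i)))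
        - Z (lastF n hn) ⊗ₜ[ℤ] (j (gm (lastF n hn)) - j (gv (lastF n hn))) := by
    rw [hM, hfun (fun i => ∑ k ∈ Finset.Iio i, FoxCol k ⊗ₜ[ℤ] (j (gm i) - j (gu i))), h3, ← hD]
    abel
  -- step 8 : right-hand side
  have hRY : ∀ i : Fin n,
      TensorProduct.map (rmul1 (e (Sum.inl i))) (rmul0 (j (gel (Sum.inl i))))
          (Delta0 (fox (Sum.inl i)))
        = (j (gu i) • Y i) ⊗ₜ[ℤ] j (gs i) - (j (gv i) • Y i) ⊗ₜ[ℤ] j (gm i) := by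
    intro i
    rw [show fox (Sum.inl i) = Fa i from rfl, Fa_eq, map_sub, Delta0_of, Delta0_of, map_sub,
      TensorProduct.map_tmul, TensorProduct.map_tmul]
    simp only [rmul1_apply, rmul0_apply, e_inl, gel_inl, ← map_mul, gu_mul_a, gv_mul_a]
  have hRZ : ∀ i : Fin n,
      TensorProduct.map (rmul1 (e (Sum.inr i))) (rmul0 (j (gel (Sum.inr i))))
          (Delta0 (fox (Sum.inr i)))
        = (j (gs i) • Z i) ⊗ₜ[ℤ] j (gm i) - (j (gt i) • Z i) ⊗ₜ[ℤ] j (gv i) := by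
    intro i
    rw [show fox (Sum.inr i) = Fb i from rfl, Fb_eq, map_sub, Delta0_of, Delta0_of, map_sub,
      TensorProduct.map_tmul, TensorProduct.map_tmul]
    simp only [rmul1_apply, rmul0_apply, e_inr, gel_inr, ← map_mul, gs_mul_b, gt_mul_b]
  rw [Fintype.sum_sum_type]
  simp only [hRY, hRZ]
  rw [← Finset.sum_add_distrib]
  -- step 9 : assemble and compare summand-wise
  rw [d2_one, TensorProduct.sum_tmul, hM2, Iio_last hn]
  rw [Finset.sum_filter, Finset.sum_filter, Finset.sum_filter]
  have hX6 : Z (lastF n hn) ⊗ₜ[ℤ] (j (gm (lastF n hn)) - j (gv (lastF n hn)))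
      = ∑ k : Fin n, if k = lastF n hn then Z k ⊗ₜ[ℤ] (j (gm k) - j (gv k)) else 0 := by
    rw [Finset.sum_ite_eq']
    simp
  rw [hX6]
  simp only [← Finset.sum_sub_distrib, ← Finset.sum_add_distrib]
  refine Finset.sum_congr rfl fun k _ => ?_
  by_cases hk : (k : ℕ) + 1 < n
  · have hne : ¬(k = lastF n hn) := by
      intro h
      rw [h] at hk
      simp only [lastF] at hk
      omega
    rw [if_pos hk, if_pos hk, if_pos hk, if_pos hk, if_neg hne]
    rw [FoxCol_eq, Fa_eq]
    simp only [sub_smul, TensorProduct.tmul_sub, TensorProduct.sub_tmul,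
      TensorProduct.add_tmul, TensorProduct.tmul_add, TensorProduct.tmul_zero]
    abel
  · have hlast : k = lastF n hn := by
      apply Fin.ext
      have := k.isLt
      simp only [lastF]
      omega
    rw [if_neg hk, if_neg hk, if_neg hk, if_neg hk, if_pos hlast, hlast]
    rw [FoxCol_eq, gt_last hn, gv_last hn, map_one]
    simp only [one_smul, sub_smul, TensorProduct.tmul_sub, TensorProduct.sub_tmul,
      TensorProduct.add_tmul, TensorProduct.tmul_add, TensorProduct.tmul_zero]
    abel

end KeyB
section Chain2
variable {n : ℕ}
open TensorProduct

lemma d2_smul (g : SurfaceGroup n) (r : A n) : d2 (j g * r) = j g • d2 r := by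
  rw [← smul_eq_mul, LinearMap.map_smul]

lemma d1_smulg (g : SurfaceGroup n) (f : P1 n) : d1 (j g • f) = j g * d1 f := by
  rw [LinearMap.map_smul, smul_eq_mul]

lemma d2_j (g : SurfaceGroup n) : d2 (j g) = j g • d2 (1 : A n) := by
  rw [show (j g : A n) = j g * 1 from (mul_one _).symm, d2_smul, mul_one]

lemma Delta1_d2_one_fst :
    (Delta1 (d2 (1 : A n))).1
      = ∑ s : Gen n, TensorProduct.map LinearMap.id (rmul1 (e s)) (Delta0 (fox s)) := by
  rw [Delta1_apply]
  simp only [d2_apply, one_mul]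

lemma Delta1_d2_one_snd :
    (Delta1 (d2 (1 : A n))).2
      = ∑ s : Gen n, TensorProduct.map (rmul1 (e s)) (rmul0 (j (gel s))) (Delta0 (fox s)) := by
  rw [Delta1_apply]
  simp only [d2_apply, one_mul]

lemma chain2a (hn : 1 ≤ n) (r : P2 n) :
    TensorProduct.map LinearMap.id d2z ((Delta2 n hn r).1)
      + TensorProduct.map d1z LinearMap.id ((Delta2 n hn r).2.1) = (Delta1 (d2 r)).1 := by
  rw [Delta2_apply]
  have hlin : ((TensorProduct.map LinearMap.id d2z) ∘ₗ Delta0)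
        + ((TensorProduct.map d1z LinearMap.id) ∘ₗ Mmid n hn)
      = (LinearMap.fst ℤ (P0 n ⊗[ℤ] P1 n) (P1 n ⊗[ℤ] P0 n)) ∘ₗ Delta1 ∘ₗ d2z := by
    apply ext_of
    intro g
    simp only [LinearMap.add_apply, LinearMap.comp_apply, LinearMap.fst_apply,
      Delta0_of, Mmid_of hn]
    have e1 : TensorProduct.map LinearMap.id d2z ((j g : A n) ⊗ₜ[ℤ] (j g : A n))
        = TensorProduct.map (L0 g) (L1 g) ((1 : P0 n) ⊗ₜ[ℤ] d2 (1 : A n)) := by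
      rw [TensorProduct.map_tmul, TensorProduct.map_tmul, LinearMap.id_apply, d2z_apply]
      rw [L0_apply, mul_one, L1_apply, d2_j]
    have e2 : TensorProduct.map d1z LinearMap.id
          (TensorProduct.map (L1 g) (L1 g) (Delta11 n hn))
        = TensorProduct.map (L0 g) (L1 g)
          (TensorProduct.map d1z LinearMap.id (Delta11 n hn)) := by
      induction (Delta11 n hn) using TensorProduct.induction_on with
      | zero => simp
      | tmul x y =>
          simp only [TensorProduct.map_tmul, LinearMap.id_apply, d1z_apply, L1_apply,
            d1_smulg, L0_apply]
      | add u v hu hv => simp only [map_add, hu, hv]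
    change TensorProduct.map LinearMap.id d2z (Delta0 (j g))
      + TensorProduct.map d1z LinearMap.id (Mmid n hn (j g)) = _
    rw [Delta0_of, Mmid_of hn]
    rw [e1, e2, ← map_add, keyA hn, ← Delta1_d2_one_fst, d2z_apply, d2_j]
    rw [Delta1_equivariant g (d2 (1 : A n))]
  exact LinearMap.congr_fun hlin r

lemma chain2b (hn : 1 ≤ n) (r : P2 n) :
    TensorProduct.map d2z LinearMap.id ((Delta2 n hn r).2.2)
      - TensorProduct.map LinearMap.id d1z ((Delta2 n hn r).2.1) = (Delta1 (d2 r)).2 := by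
  rw [Delta2_apply]
  have hlin : ((TensorProduct.map d2z LinearMap.id)
          ∘ₗ (TensorProduct.map LinearMap.id (rmul0 (j (gm (lastF n hn))))) ∘ₗ Delta0)
        - ((TensorProduct.map LinearMap.id d1z) ∘ₗ Mmid n hn)
      = (LinearMap.snd ℤ (P0 n ⊗[ℤ] P1 n) (P1 n ⊗[ℤ] P0 n)) ∘ₗ Delta1 ∘ₗ d2z := by
    apply ext_of
    intro g
    simp only [LinearMap.sub_apply, LinearMap.comp_apply, LinearMap.snd_apply,
      Delta0_of, Mmid_of hn]
    have e1 : TensorProduct.map d2z LinearMap.id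
          (TensorProduct.map LinearMap.id (rmul0 (j (gm (lastF n hn))))
            ((j g : A n) ⊗ₜ[ℤ] (j g : A n)))
        = TensorProduct.map (L1 g) (L0 g) (d2 (1 : A n) ⊗ₜ[ℤ] j (gm (lastF n hn))) := by
      rw [TensorProduct.map_tmul, TensorProduct.map_tmul, TensorProduct.map_tmul]
      rw [LinearMap.id_apply, rmul0_apply, d2z_apply, d2_j, LinearMap.id_apply]
      rw [L1_apply, L0_apply]
    have e2 : TensorProduct.map LinearMap.id d1z
          (TensorProduct.map (L1 g) (L1 g) (Delta11 n hn))
        = TensorProduct.map (L1 g) (L0 g)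
          (TensorProduct.map LinearMap.id d1z (Delta11 n hn)) := by
      induction (Delta11 n hn) using TensorProduct.induction_on with
      | zero => simp
      | tmul x y =>
          simp only [TensorProduct.map_tmul, LinearMap.id_apply, d1z_apply, L1_apply,
            d1_smulg, L0_apply]
      | add u v hu hv => simp only [map_add, hu, hv]
    change _ = (Delta1 (d2z (j g))).2
    rw [e1, e2, ← map_sub, keyB hn, ← Delta1_d2_one_snd, d2z_apply, d2_j]
    rw [Delta1_equivariant g (d2 (1 : A n))]
  exact LinearMap.congr_fun hlin r

end Chain2
/-- there is a diagonal approximation `Δ : P → P ⊗ P` (a chain map of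
complexes of `ℤG`-modules, where `P ⊗ P` carries the diagonal `G`-action, compatible with
the augmentations) whose components take the stated values on the generators `x`, `yᵢ`,
`zᵢ` and `w`.  `ℤG`-linearity into the diagonal action is expressed as `ℤ`-linearity
together with `G`-equivariance. -/
theorem statement1 (n : ℕ) (hn : 1 ≤ n) :
    ∃ (Δ0 : P0 n →ₗ[ℤ] P0 n ⊗[ℤ] P0 n)
      (Δ1 : P1 n →ₗ[ℤ] (P0 n ⊗[ℤ] P1 n) × (P1 n ⊗[ℤ] P0 n))
      (Δ2 : P2 n →ₗ[ℤ] (P0 n ⊗[ℤ] P2 n) × (P1 n ⊗[ℤ] P1 n) × (P2 n ⊗[ℤ] P0 n)),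
      -- `ℤG`-linearity (equivariance for the diagonal action on the target)
      (∀ (g : SurfaceGroup n) (r : P0 n),
        Δ0 (j g * r) = TensorProduct.map (L0 g) (L0 g) (Δ0 r)) ∧
      (∀ (g : SurfaceGroup n) (f : P1 n),
        Δ1 (j g • f) = (TensorProduct.map (L0 g) (L1 g) (Δ1 f).1,
                        TensorProduct.map (L1 g) (L0 g) (Δ1 f).2)) ∧
      (∀ (g : SurfaceGroup n) (r : P2 n),
        Δ2 (j g * r) = (TensorProduct.map (L0 g) (L0 g) (Δ2 r).1,
                        TensorProduct.map (L1 g) (L1 g) (Δ2 r).2.1,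
                        TensorProduct.map (L0 g) (L0 g) (Δ2 r).2.2)) ∧
      -- compatibility with the augmentation: `(ε ⊗ ε) ∘ Δ₀ = ε`
      (∀ r : P0 n, augaug (Δ0 r) = aug r) ∧
      -- chain map condition in degree 1: `∂₁ ∘ Δ₁ = Δ₀ ∘ d₁`
      (∀ f : P1 n,
        TensorProduct.map LinearMap.id d1z ((Δ1 f).1)
          + TensorProduct.map d1z LinearMap.id ((Δ1 f).2) = Δ0 (d1 f)) ∧
      -- chain map condition in degree 2: `∂₂ ∘ Δ₂ = Δ₁ ∘ d₂`
      (∀ r : P2 n,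
        (TensorProduct.map LinearMap.id d2z ((Δ2 r).1)
            + TensorProduct.map d1z LinearMap.id ((Δ2 r).2.1),
         TensorProduct.map d2z LinearMap.id ((Δ2 r).2.2)
            - TensorProduct.map LinearMap.id d1z ((Δ2 r).2.1)) = Δ1 (d2 r)) ∧
      -- the stated values on generators
      Δ0 (1 : P0 n) = (1 : P0 n) ⊗ₜ[ℤ] (1 : P0 n) ∧
      (∀ i : Fin n, Δ1 (Y i) = ((1 : P0 n) ⊗ₜ[ℤ] Y i, Y i ⊗ₜ[ℤ] j (a i))) ∧
      (∀ i : Fin n, Δ1 (Z i) = ((1 : P0 n) ⊗ₜ[ℤ] Z i, Z i ⊗ₜ[ℤ] j (b i))) ∧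
      (Δ2 (1 : P2 n)).1 = (1 : P0 n) ⊗ₜ[ℤ] (1 : P2 n) ∧
      (Δ2 (1 : P2 n)).2.1 = Delta11 n hn := by
  refine ⟨Delta0, Delta1, Delta2 n hn,
    Delta0_equivariant, Delta1_equivariant, Delta2_equivariant hn, aug_compat, chain1,
    fun r => ?_, Delta0_one, Delta1_Y, Delta1_Z, ?_, ?_⟩
  · exact Prod.ext (chain2a hn r) (chain2b hn r)
  · rw [Delta2_apply, Delta0_one]
  · rw [Delta2_apply, Mmid_one hn]

end SurfaceOr
end

section
/- Let M and N be abelian groups regarded as trivial ℤG-modules, and let u: P_1 → M and v: P_1 → N be ℤG-module homomorphisms. Then ((u ⊗ v) ∘ Δ_{11})(w) = Σ_{i=1}^n (u(y_i) ⊗ v(z_i) − u(z_i) ⊗ v(y_i)) in M ⊗_ℤ N. Consequently, if u and v are cocycles representing classes in H^1(G,M) and H^1(G,N), their cup product in H^2(G, M⊗N) is represented by the homomorphism P_2 → M⊗N sending w to Σ_{i=1}^n (u(y_i)⊗v(z_i) − u(z_i)⊗v(y_i)). -/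
open scoped TensorProduct
open scoped commutatorElement

namespace SurfaceOr

/-- for trivial `ℤG`-modules `M`, `N` and `ℤG`-homomorphisms
`u : P₁ → M`, `v : P₁ → N` (i.e. `ℤ`-linear `G`-invariant maps), the composite
`(u ⊗ v) ∘ Δ₁₁` sends `w` to `Σᵢ (u(yᵢ) ⊗ v(zᵢ) - u(zᵢ) ⊗ v(yᵢ))`; hence the cup
product of the classes of the cocycles `u` and `v` is represented by the homomorphism
`P₂ → M ⊗ N` sending `w` to this element. -/
theorem statement2 (n : ℕ) (hn : 1 ≤ n) (M N : Type) [AddCommGroup M] [AddCommGroup N]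
    (u : P1 n →ₗ[ℤ] M) (v : P1 n →ₗ[ℤ] N)
    (hu : ∀ (g : SurfaceGroup n) (f : P1 n), u (j g • f) = u f)
    (hv : ∀ (g : SurfaceGroup n) (f : P1 n), v (j g • f) = v f) :
    TensorProduct.map u v (Delta11 n hn) =
      ∑ i : Fin n, (u (Y i) ⊗ₜ[ℤ] v (Z i) - u (Z i) ⊗ₜ[ℤ] v (Y i)) := by
  have hFaf : ∀ (i : Fin n) (f : P1 n), u (Fa i • f) = 0 := by
    intro i f
    have h : Fa i • f =
        j (q (n := n) i.val) • f - j (q (n := n) i.val * (a i * b i * (a i)⁻¹)) • f := by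
      rw [Fa, mul_sub, mul_one, ← map_mul, sub_smul]
    rw [h, map_sub, hu, hu, sub_self]
  have hFbf : ∀ (i : Fin n) (f : P1 n), u (Fb i • f) = 0 := by
    intro i f
    have h : Fb i • f =
        j (q (n := n) i.val * a i) • f -
          j (q (n := n) i.val * a i * (b i * (a i)⁻¹ * (b i)⁻¹)) • f := by
      rw [Fb, mul_sub, mul_one, ← map_mul, sub_smul]
    rw [h, map_sub, hu, hu, sub_self]
  have hFox : ∀ i : Fin n, u (FoxCol i) = 0 := by
    intro i; rw [FoxCol, map_add, hFaf, hFbf, add_zero]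
  have hsplit : (∑ i ∈ Finset.univ.filter (fun i : Fin n => (i : ℕ) + 1 < n),
        u (Z i) ⊗ₜ[ℤ] v (Y i))
      + u (Z (⟨n - 1, by omega⟩ : Fin n)) ⊗ₜ[ℤ] v (Y (⟨n - 1, by omega⟩ : Fin n))
      = ∑ i : Fin n, u (Z i) ⊗ₜ[ℤ] v (Y i) := by
    rw [← Finset.sum_filter_add_sum_filter_not Finset.univ
      (fun i : Fin n => (i : ℕ) + 1 < n) (fun i => u (Z i) ⊗ₜ[ℤ] v (Y i))]
    congr 1
    have : Finset.univ.filter (fun i : Fin n => ¬ ((i : ℕ) + 1 < n)) =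
        {(⟨n - 1, by omega⟩ : Fin n)} := by
      ext i
      simp only [Finset.mem_filter, Finset.mem_univ, true_and, Finset.mem_singleton,
        Fin.ext_iff]
      omega
    rw [this, Finset.sum_singleton]
  rw [Delta11]
  simp only [map_sub, map_add, map_sum, TensorProduct.map_tmul, hFox, map_add, hFaf, hu, hv,
    TensorProduct.zero_tmul, Finset.sum_const_zero, zero_add, zero_sub, sub_zero,
    Finset.sum_sub_distrib]
  rw [← hsplit]
  abel

end SurfaceOr
end
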